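/- Let $\xi \in \mathbb C$ and consider formal power series in $u^1, u^2$. Define $c^1_{\beta\gamma} := \frac{\partial^2 F^1}{\partial u^\beta\partial u^\gamma}$ and $c^2_{\beta\gamma} := \frac{\partial^2 F^2}{\partial u^\beta\partial u^\gamma}$ where $F^1 = \frac{(u^1)^2/2 + u^1\xi(u^2)^2/2 - \frac{\xi(u^2)^3}{24}(4+\xi u^2)}{1+\xi u^2}$ and $F^2 = \frac{(u^2)^2}{2}$. Then, after the substitution $u^1 = (1+\xi\bar u^2)\bar u^1 - \xi(\bar u^2)^2/2$, $u^2 = \bar u^2$, the matrices $C_\gamma = (c^\alpha_{\beta\gamma})$ are given by $C_1 = \begin{pmatrix}\frac{1}{1+\xi\bar u^2} & \frac{\xi(\bar u^2 - \bar u^1)}{1+\xi\bar u^2}\\ 0 & 0\end{pmatrix}$ and $C_2 = \begin{pmatrix}\frac{\xi(\bar u^2 - \bar u^1)}{1+\xi\bar u^2} & \frac{\xi(\bar u^1 - \bar u^2)(1+\xi\bar u^1)}{1+\xi\bar u^2}\\ 0 & 1\end{pmatrix}$. -/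

import Mathlib

open scoped Classical

noncomputable section

abbrev S2 := MvPowerSeries (Fin 2) ℂ

/-- Partial derivative `∂/∂u^i` on `ℂ[[u¹,u²]]`, defined coefficientwise. -/
def pdv (i : Fin 2) (f : S2) : S2 := fun m =>
  (m i + 1) • MvPowerSeries.coeff (R := ℂ) (m + Finsupp.single i 1) f

def CC (c : ℂ) : S2 := MvPowerSeries.C (σ := Fin 2) (R := ℂ) c

def U1 : S2 := MvPowerSeries.X 0
def U2 : S2 := MvPowerSeries.X 1

lemma coeff_pdv (i : Fin 2) (f : S2) (m : Fin 2 →₀ ℕ) :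
    MvPowerSeries.coeff (R := ℂ) m (pdv i f)
      = ((m i : ℂ) + 1) * MvPowerSeries.coeff (R := ℂ) (m + Finsupp.single i 1) f := by
  simp [pdv, MvPowerSeries.coeff_apply, nsmul_eq_mul]

lemma pdv_add (i : Fin 2) (f g : S2) : pdv i (f + g) = pdv i f + pdv i g := by
  apply MvPowerSeries.ext; intro m
  simp [coeff_pdv, map_add, mul_add]

lemma pdv_C (i : Fin 2) (c : ℂ) : pdv i (CC c) = 0 := by
  apply MvPowerSeries.ext; intro m
  rw [coeff_pdv]
  have h : m + Finsupp.single i 1 ≠ 0 := by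
    intro h
    have := DFunLike.congr_fun h i
    simp at this
  simp [CC, MvPowerSeries.coeff_C, h]

lemma pdv_one (i : Fin 2) : pdv i (1 : S2) = 0 := by
  have := pdv_C i 1
  rwa [show CC 1 = (1:S2) by simp [CC]] at this

lemma pdv_X_self (i : Fin 2) : pdv i (MvPowerSeries.X i : S2) = 1 := by
  apply MvPowerSeries.ext; intro m
  rw [coeff_pdv, MvPowerSeries.coeff_X]
  by_cases hm : m = 0
  · subst hm; simp
  · have h : ¬ (m + Finsupp.single i 1 = Finsupp.single i 1) := by
      intro h
      exact hm (by simpa using add_right_cancel (h.trans (zero_add (Finsupp.single i 1)).symm))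
    simp [h, MvPowerSeries.coeff_one, hm]

lemma pdv_X_ne (i j : Fin 2) (hij : j ≠ i) : pdv i (MvPowerSeries.X j : S2) = 0 := by
  apply MvPowerSeries.ext; intro m
  rw [coeff_pdv, MvPowerSeries.coeff_X]
  have h : ¬ (m + Finsupp.single i 1 = Finsupp.single j 1) := by
    intro h
    have := DFunLike.congr_fun h i
    simp [Finsupp.single_apply, (by simpa using hij : ¬ j = i)] at this
  simp [h]


section
open Finset MvPowerSeries

abbrev I2 := (Fin 2 →₀ ℕ) × (Fin 2 →₀ ℕ)

lemma key (i : Fin 2) (F G : (Fin 2 →₀ ℕ) → ℂ) (m : Fin 2 →₀ ℕ) :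
    ∑ x ∈ (Finset.HasAntidiagonal.antidiagonal (m + Finsupp.single i 1) : Finset I2), ((x.1 : Fin 2 →₀ ℕ) i : ℂ) * (F x.1 * G x.2)
      = ∑ x ∈ (Finset.HasAntidiagonal.antidiagonal m : Finset I2), (((x.1 : Fin 2 →₀ ℕ) i : ℂ) + 1) * (F (x.1 + Finsupp.single i 1) * G x.2) := by
  rw [← Finset.sum_filter_of_ne (p := fun x : I2 => x.1 i ≠ 0)
      (by intro x _ hx h0; simp only [h0, Nat.cast_zero, zero_mul, ne_eq, not_true_eq_false] at hx)]
  refine (Finset.sum_bij' (fun (x : I2) (_ : x ∈ (Finset.HasAntidiagonal.antidiagonal m : Finset I2)) => ((x.1 + Finsupp.single i 1, x.2) : I2))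
    (fun (x : I2) (_ : x ∈ (Finset.HasAntidiagonal.antidiagonal (m + Finsupp.single i 1) : Finset I2).filter (fun x : I2 => x.1 i ≠ 0)) => ((x.1 - Finsupp.single i 1, x.2) : I2)) ?_ ?_ ?_ ?_ ?_).symm
  · intro a ha
    simp only [Finset.HasAntidiagonal.mem_antidiagonal] at ha
    simp only [Finset.mem_filter, Finset.HasAntidiagonal.mem_antidiagonal]
    constructor
    · rw [add_right_comm, ha]
    · simp
  · intro a ha
    simp only [Finset.mem_filter, Finset.HasAntidiagonal.mem_antidiagonal] at ha
    obtain ⟨h1, h2⟩ := ha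
    simp only [Finset.HasAntidiagonal.mem_antidiagonal]
    have hle : Finsupp.single i 1 ≤ a.1 := by
      rw [Finsupp.single_le_iff]; omega
    have hc : a.1 - Finsupp.single i 1 + Finsupp.single i 1 = a.1 := tsub_add_cancel_of_le hle
    refine add_right_cancel (b := Finsupp.single i 1) ?_
    rw [add_right_comm, hc, h1]
  · intro a ha
    simp
  · intro a ha
    simp only [Finset.mem_filter, Finset.HasAntidiagonal.mem_antidiagonal] at ha
    have hle : Finsupp.single i 1 ≤ a.1 := by
      rw [Finsupp.single_le_iff]; omega
    exact Prod.ext (tsub_add_cancel_of_le hle) rfl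
  · intro a ha
    simp only
    have h4 : ((((a.1 + Finsupp.single i 1) : Fin 2 →₀ ℕ)) i : ℂ) = (a.1 i : ℂ) + 1 := by
      push_cast [Finsupp.add_apply, Finsupp.single_apply]
      simp
    rw [h4]

lemma key2 (i : Fin 2) (F G : (Fin 2 →₀ ℕ) → ℂ) (m : Fin 2 →₀ ℕ) :
    ∑ x ∈ (Finset.HasAntidiagonal.antidiagonal (m + Finsupp.single i 1) : Finset I2), ((x.2 : Fin 2 →₀ ℕ) i : ℂ) * (F x.1 * G x.2)
      = ∑ x ∈ (Finset.HasAntidiagonal.antidiagonal m : Finset I2), (((x.2 : Fin 2 →₀ ℕ) i : ℂ) + 1) * (F x.1 * G (x.2 + Finsupp.single i 1)) := by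
  rw [← Finset.HasAntidiagonal.map_swap_antidiagonal (n := m + Finsupp.single i 1), Finset.sum_map,
      ← Finset.HasAntidiagonal.map_swap_antidiagonal (n := m), Finset.sum_map]
  simpa [mul_comm (G _) (F _)] using key i G F m

lemma pdv_mul (i : Fin 2) (f g : S2) : pdv i (f * g) = pdv i f * g + f * pdv i g := by
  apply MvPowerSeries.ext; intro m
  rw [map_add, coeff_pdv, MvPowerSeries.coeff_mul, MvPowerSeries.coeff_mul, MvPowerSeries.coeff_mul,
    Finset.mul_sum]
  have step : ∀ x ∈ (Finset.HasAntidiagonal.antidiagonal (m + Finsupp.single i 1) : Finset I2),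
      ((m i : ℂ) + 1) * (MvPowerSeries.coeff (R := ℂ) x.1 f * MvPowerSeries.coeff (R := ℂ) x.2 g)
        = ((x.1 : Fin 2 →₀ ℕ) i : ℂ) * (MvPowerSeries.coeff (R := ℂ) x.1 f * MvPowerSeries.coeff (R := ℂ) x.2 g)
          + ((x.2 : Fin 2 →₀ ℕ) i : ℂ) * (MvPowerSeries.coeff (R := ℂ) x.1 f * MvPowerSeries.coeff (R := ℂ) x.2 g) := by
    intro x hx
    rw [Finset.HasAntidiagonal.mem_antidiagonal] at hx
    have hxy : ((x.1 : Fin 2 →₀ ℕ) i : ℂ) + ((x.2 : Fin 2 →₀ ℕ) i : ℂ) = (m i : ℂ) + 1 := by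
      have := DFunLike.congr_fun hx i
      simp only [Finsupp.add_apply, Finsupp.single_apply, if_pos rfl] at this
      exact_mod_cast this
    rw [← add_mul, hxy]
  have k1 := key i (fun p => MvPowerSeries.coeff (R := ℂ) p f) (fun p => MvPowerSeries.coeff (R := ℂ) p g) m
  have k2 := key2 i (fun p => MvPowerSeries.coeff (R := ℂ) p f) (fun p => MvPowerSeries.coeff (R := ℂ) p g) m
  beta_reduce at k1 k2
  rw [Finset.sum_congr rfl step, Finset.sum_add_distrib, k1, k2]
  congr 1
  · exact Finset.sum_congr rfl (fun x _ => by rw [coeff_pdv]; ring)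
  · exact Finset.sum_congr rfl (fun x _ => by rw [coeff_pdv]; ring)

end

lemma pdv_zero (i : Fin 2) : pdv i (0 : S2) = 0 := by
  apply MvPowerSeries.ext; intro m
  simp [coeff_pdv]

lemma pdv_neg (i : Fin 2) (f : S2) : pdv i (-f) = -pdv i f := by
  apply MvPowerSeries.ext; intro m
  simp [coeff_pdv]

lemma pdv_sub (i : Fin 2) (f g : S2) : pdv i (f - g) = pdv i f - pdv i g := by
  apply MvPowerSeries.ext; intro m
  simp [coeff_pdv, mul_sub]

lemma CC_ofNat (n : ℕ) [n.AtLeastTwo] : CC (OfNat.ofNat n) = (OfNat.ofNat n : S2) :=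
  map_ofNat (MvPowerSeries.C (σ := Fin 2) (R := ℂ)) n

lemma pdv_ofNat (i : Fin 2) (n : ℕ) [n.AtLeastTwo] : pdv i (OfNat.ofNat n : S2) = 0 := by
  rw [← CC_ofNat n]; exact pdv_C i _

lemma pdv0U1 : pdv 0 U1 = 1 := pdv_X_self 0
lemma pdv1U2 : pdv 1 U2 = 1 := pdv_X_self 1
lemma pdv1U1 : pdv 1 U1 = 0 := pdv_X_ne 1 0 (by decide)
lemma pdv0U2 : pdv 0 U2 = 0 := pdv_X_ne 0 1 (by decide)

lemma CC_mul (a b : ℂ) : CC a * CC b = CC (a * b) := (map_mul (MvPowerSeries.C (σ := Fin 2) (R := ℂ)) a b).symm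

lemma CC_hH : CC (1/2) * 2 = (1 : S2) := by
  rw [← CC_ofNat 2, CC_mul]
  norm_num
  exact map_one (MvPowerSeries.C (σ := Fin 2) (R := ℂ))

lemma CC_hK : CC (1/24) * 24 = (1 : S2) := by
  rw [← CC_ofNat 24, CC_mul]
  norm_num
  exact map_one (MvPowerSeries.C (σ := Fin 2) (R := ℂ))

lemma CC_four : CC 4 = (4 : S2) := CC_ofNat 4

lemma cancel12 (f g : S2) (h : (12 : S2) * f = 12 * g) : f = g := by
  apply MvPowerSeries.ext; intro m
  have h12 : (12 : S2) = CC 12 := (CC_ofNat 12).symm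
  rw [h12] at h
  have := congrArg (MvPowerSeries.coeff (R := ℂ) m) h
  rw [CC, MvPowerSeries.coeff_C_mul, MvPowerSeries.coeff_C_mul] at this
  exact mul_left_cancel₀ (by norm_num) this

/-- the matrices `C_γ = (c^α_{βγ})` of second derivatives of the
genus-0 potentials `F¹, F²`, expressed after the substitution
`u¹ = (1+ξū²)ū¹ - ξ(ū²)²/2`, `u² = ū²` (equivalently, with
`ū¹ = b₁ = (u¹+ξ(u²)²/2)/(1+ξu²)`, `ū² = u²`, `w = (1+ξu²)⁻¹`). -/
theorem statement19 (ξ : ℂ)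
    (w : S2) (hw : (1 + CC ξ * U2) * w = 1)
    (b1 : S2) (hb1 : b1 = (U1 + CC ξ * CC (1/2) * U2 ^ 2) * w)
    (Fv : Fin 2 → S2)
    (hF1 : Fv 0 = (CC (1/2) * U1 ^ 2 + U1 * CC ξ * CC (1/2) * U2 ^ 2 -
      CC ξ * CC (1/24) * U2 ^ 3 * (CC 4 + CC ξ * U2)) * w)
    (hF2 : Fv 1 = CC (1/2) * U2 ^ 2)
    (C1 C2 : Matrix (Fin 2) (Fin 2) S2)
    (hC1 : C1 = !![w, CC ξ * (U2 - b1) * w; 0, 0])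
    (hC2 : C2 = !![CC ξ * (U2 - b1) * w, CC ξ * (b1 - U2) * (1 + CC ξ * b1) * w; 0, 1]) :
    (∀ α β : Fin 2, pdv β (pdv 0 (Fv α)) = C1 α β) ∧
    (∀ α β : Fin 2, pdv β (pdv 1 (Fv α)) = C2 α β) := by
  subst hb1 hC1 hC2
  have hH := CC_hH
  have hK := CC_hK
  have hC4 : CC (4:ℂ) = (4:S2) := CC_four
  have h0w : pdv 0 w = 0 := by
    have hc := congrArg (pdv 0) hw
    simp only [pdv_mul, pdv_add, pdv_one, pdv_C, pdv0U1, pdv0U2, pdv1U1, pdv1U2, mul_zero,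
      zero_mul, add_zero, zero_add, mul_one, one_mul] at hc
    linear_combination w * hc - pdv 0 w * hw
  have h1w : pdv 1 w = -(CC ξ * (w * w)) := by
    have hc := congrArg (pdv 1) hw
    simp only [pdv_mul, pdv_add, pdv_one, pdv_C, pdv0U1, pdv0U2, pdv1U1, pdv1U2, mul_zero,
      zero_mul, add_zero, zero_add, mul_one, one_mul] at hc
    linear_combination w * hc - pdv 1 w * hw
  constructor <;> intro α β <;> fin_cases α <;> fin_cases β <;>
    simp only [hF1, hF2, Fin.zero_eta, Fin.mk_one, Fin.isValue, Matrix.cons_val',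
      Matrix.cons_val_zero, Matrix.cons_val_one, Matrix.head_cons, Matrix.empty_val',
      Matrix.cons_val_fin_one, Matrix.head_fin_const, Matrix.of_apply] <;>
    simp only [pow_succ, pow_zero, one_mul, pdv_add, pdv_sub, pdv_neg, pdv_mul, pdv_C,
      pdv_one, pdv_zero, pdv0U1, pdv0U2, pdv1U1, pdv1U2, h0w, h1w, mul_zero, zero_mul,
      add_zero, zero_add, mul_one, one_mul, sub_zero, zero_sub, neg_zero, neg_neg, mul_neg, neg_mul]
  · linear_combination ((1 : S2) * w) * hH
  · linear_combination ((1 : S2) * U2 * w * (CC ξ) + (-1 : S2) * U1 * w^2 * (CC ξ)) * hH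
  · linear_combination ((1 : S2) * U2 * w * (CC ξ) + (-1 : S2) * U1 * w^2 * (CC ξ)) * hH
  · apply cancel12
    linear_combination ((-6 : S2) * U2^2 * w^2 * (CC ξ)^2 + (6 : S2) * U2^3 * w^2 * (CC ξ)^3 + (-3 : S2) * U2^4 * w^3 * (CC ξ)^4 + (-6 : S2) * U2^4 * w^3 * (CC ξ)^4 * (CC (1/2 : ℂ)) + (12 : S2) * U1 * w * (CC ξ) + (-24 : S2) * U1 * U2 * w^2 * (CC ξ)^2 + (12 : S2) * U1^2 * w^3 * (CC ξ)^2) * hH + ((-3 : S2) * U2 * w * (CC ξ) * (CC (4:ℂ)) + (-6 : S2) * U2^2 * w * (CC ξ)^2 + (3 : S2) * U2^2 * w^2 * (CC ξ)^2 * (CC (4:ℂ)) + (4 : S2) * U2^3 * w^2 * (CC ξ)^3 + (-1 : S2) * U2^3 * w^3 * (CC ξ)^3 * (CC (4:ℂ)) + (-1 : S2) * U2^4 * w^3 * (CC ξ)^4) * hK + ((-3 : S2) * U2 * w * (CC ξ) + (3 : S2) * U2^2 * w^2 * (CC ξ)^2 + (-1 : S2) * U2^3 * w^3 * (CC ξ)^3)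 * hC4 + ((6 : S2) * U2^2 * w * (CC ξ)^2 + (-4 : S2) * U2^3 * w^2 * (CC ξ)^3 + (-12 : S2) * U1 * w * (CC ξ)) * hw
  · linear_combination ((1 : S2)) * hH

end
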